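/- If a tangle generating function datum of size m (i.e. vectors S, A ∈ ℤ^m and a symmetric matrix Q ∈ ℤ^{m×m}) in 'active quiver form' with extra Pochhammer factor (q²;q²)_{|d_+|} over active indices d_+ ∈ ℕ^{m_+} is expanded via the Pochhammer-splitting lemma (applied with x² = q²), then the resulting datum in plain quiver form has size m + m_+, obtained by duplicating each active index; in particular the abstract identity holds: Σ_{d ∈ ℕ^{m}} f(d)·(q²;q²)_{|d_+|} = Σ_{d' ∈ ℕ^{m+m_+}} f'(d') where f' arises from f by substituting each active index d_i with a sum of two new indices and multiplying by an explicit sign and q-power monomial. -/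

import Mathlib

open Finset

noncomputable def q : RatFunc ℚ := RatFunc.X

/-- `(q²;q²)_k = ∏_{i=1}^{k} (1 - q^{2i})`. -/
noncomputable def qp (k : ℕ) : RatFunc ℚ := ∏ i ∈ Finset.range k, (1 - q ^ (2 * (i + 1)))

lemma q_pow_ne_one {n : ℕ} (hn : 0 < n) : q ^ n ≠ 1 := by
  intro h
  have h2 : (algebraMap (Polynomial ℚ) (RatFunc ℚ)) (Polynomial.X ^ n) =
      (algebraMap (Polynomial ℚ) (RatFunc ℚ)) 1 := by
    simpa [map_pow, RatFunc.algebraMap_X, q] using h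
  have h3 := RatFunc.algebraMap_injective ℚ h2
  have h4 := congrArg Polynomial.natDegree h3
  simp [Polynomial.natDegree_X_pow] at h4
  omega

lemma qp_zero : qp 0 = 1 := by simp [qp]

lemma qp_succ (k : ℕ) : qp (k + 1) = qp k * (1 - q ^ (2 * (k + 1))) := by
  simp [qp, Finset.prod_range_succ]

lemma qp_ne_zero (k : ℕ) : qp k ≠ 0 := by
  refine Finset.prod_ne_zero_iff.mpr fun i _ => ?_
  intro h
  exact q_pow_ne_one (n := 2 * (i + 1)) (by omega) (sub_eq_zero.mp h).symm

noncomputable def B (n a : ℕ) : RatFunc ℚ :=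
  if a ≤ n then qp n / (qp a * qp (n - a)) else 0

lemma B_pascal (n a : ℕ) : B (n + 1) (a + 1) = B n (a + 1) + q ^ (2 * (n - a)) * B n a := by
  rcases lt_or_ge n a with h | h
  · simp [B, if_neg (by omega : ¬ a + 1 ≤ n + 1), if_neg (by omega : ¬ a + 1 ≤ n),
      if_neg (by omega : ¬ a ≤ n)]
    intro h'; omega
  rcases eq_or_lt_of_le h with rfl | h
  · simp [B, if_neg (by omega : ¬ a + 1 ≤ a), qp_zero,
      div_self (mul_ne_zero (qp_ne_zero _) (qp_ne_zero _)),
      div_self (qp_ne_zero _)]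
  obtain ⟨k, rfl⟩ : ∃ k, n = a + k + 1 := ⟨n - a - 1, by omega⟩
  have e1 : a + k + 1 + 1 - (a + 1) = k + 1 := by omega
  have e2 : a + k + 1 - (a + 1) = k := by omega
  have e3 : a + k + 1 - a = k + 1 := by omega
  have e4 : a + k + 1 - a = k + 1 := by omega
  simp only [B, if_pos (by omega : a + 1 ≤ a + k + 1 + 1), if_pos (by omega : a + 1 ≤ a + k + 1),
    if_pos (by omega : a ≤ a + k + 1), e1, e2, e3]
  rw [show a + k + 1 + 1 = (a + k + 1) + 1 from rfl, qp_succ (a + k + 1), qp_succ k, qp_succ a]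
  have hP := qp_ne_zero (a + k + 1)
  have hA := qp_ne_zero a
  have hK := qp_ne_zero k
  have h1 : (1 : RatFunc ℚ) - q ^ (2 * (k + 1)) ≠ 0 := by
    intro h; exact q_pow_ne_one (n := 2 * (k+1)) (by omega) (sub_eq_zero.mp h).symm
  have h2 : (1 : RatFunc ℚ) - q ^ (2 * (a + 1)) ≠ 0 := by
    intro h; exact q_pow_ne_one (n := 2 * (a+1)) (by omega) (sub_eq_zero.mp h).symm
  field_simp
  ring

lemma B_zero' (n : ℕ) : B n 0 = 1 := by
  simp [B, qp_zero, div_self (qp_ne_zero n)]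

lemma B_top (n : ℕ) : B n (n + 1) = 0 := by
  simp [B]

lemma S_mul (n N : ℕ) :
    (∑ a ∈ range (n + 1), (-q) ^ a * q ^ (a ^ 2 + 2 * (a * N)) * B n a) * qp N
      = qp (n + N) := by
  induction n generalizing N with
  | zero => simp [B_zero']
  | succ n ih =>
    have key : (∑ a ∈ range (n + 1 + 1), (-q) ^ a * q ^ (a ^ 2 + 2 * (a * N)) * B (n + 1) a)
        = (1 - q ^ (2 * (n + N + 1))) *
          ∑ a ∈ range (n + 1), (-q) ^ a * q ^ (a ^ 2 + 2 * (a * N)) * B n a := by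
      rw [Finset.sum_range_succ' (fun a => (-q) ^ a * q ^ (a ^ 2 + 2 * (a * N)) * B (n + 1) a) (n + 1)]
      have hsplit : ∀ b ∈ range (n + 1),
          (-q) ^ (b + 1) * q ^ ((b + 1) ^ 2 + 2 * ((b + 1) * N)) * B (n + 1) (b + 1)
          = (-q) ^ (b + 1) * q ^ ((b + 1) ^ 2 + 2 * ((b + 1) * N)) * B n (b + 1)
            + (-(q ^ (2 * (n + N + 1)) * ((-q) ^ b * q ^ (b ^ 2 + 2 * (b * N)) * B n b))) := by
        intro b hb
        have hb' := Finset.mem_range.mp hb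
        rw [B_pascal, mul_add]
        congr 1
        obtain ⟨k, rfl⟩ : ∃ k, n = b + k := ⟨n - b, by omega⟩
        have e : b + k - b = k := by omega
        rw [e, pow_succ (-q) b, neg_pow q b]
        ring
      rw [Finset.sum_congr rfl hsplit, Finset.sum_add_distrib]
      have h1 : (∑ b ∈ range (n + 1),
            (-q) ^ (b + 1) * q ^ ((b + 1) ^ 2 + 2 * ((b + 1) * N)) * B n (b + 1))
          + (-q) ^ 0 * q ^ (0 ^ 2 + 2 * (0 * N)) * B (n + 1) 0
          = ∑ a ∈ range (n + 1), (-q) ^ a * q ^ (a ^ 2 + 2 * (a * N)) * B n a := by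
        rw [B_zero']
        rw [← B_zero' n]
        rw [← Finset.sum_range_succ' (fun a => (-q) ^ a * q ^ (a ^ 2 + 2 * (a * N)) * B n a) (n + 1)]
        rw [Finset.sum_range_succ, B_top]
        simp
      rw [add_right_comm, h1, Finset.sum_neg_distrib]
      rw [← Finset.mul_sum]
      ring
    rw [key, mul_assoc, ih N]
    have : n + 1 + N = (n + N) + 1 := by omega
    rw [this, qp_succ]
    ring

lemma telescope {m : ℕ} (act : Finset (Fin m)) (d : Fin m → ℕ) :
    ∏ i ∈ act, (qp (d i + ∑ j ∈ act, if j < i then d j else 0) /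
        qp (∑ j ∈ act, if j < i then d j else 0)) = qp (∑ i ∈ act, d i) := by
  induction act using Finset.induction_on_max with
  | empty => simp [qp_zero]
  | insert a s ha ih =>
    have has : a ∉ s := fun h => lt_irrefl a (ha a h)
    rw [Finset.prod_insert has, Finset.sum_insert has]
    have hfix : ∀ i ∈ s, (∑ j ∈ insert a s, if j < i then d j else 0)
        = ∑ j ∈ s, if j < i then d j else 0 := by
      intro i hi
      rw [Finset.sum_insert has, if_neg (ha i hi).asymm, zero_add]
    have hsum_a : ((if a < a then d a else 0) + ∑ x ∈ s, if x < a then d x else 0)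
        = ∑ j ∈ s, d j := by
      rw [if_neg (lt_irrefl a), zero_add]
      exact Finset.sum_congr rfl fun j hj => if_pos (ha j hj)
    rw [hsum_a, Finset.prod_congr rfl (fun i hi => by rw [hfix i hi]), ih,
      div_mul_cancel₀ _ (qp_ne_zero _), Finset.sum_insert has]

/-- Expansion of an active quiver form into plain quiver form (Remark 'deactivate'):
for any finitely supported coefficient function `f` on `ℕ^m` and any set `act` of active
indices, multiplying by the extra Pochhammer factor `(q²;q²)_{|d_+|}` and summing equals
the sum over the duplicated index set, where each active index `d_i` is split as
`d_i = α_i + β_i`, with the explicit sign `(-q)^{|α|}` and `q`-power prefactor coming from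
the `x² = q²` specialization of the KRSS Pochhammer-splitting lemma.  In particular the
resulting quiver form datum has `m + m_+` summation indices. -/
theorem deactivate_active_quiver_form {m : ℕ} (act : Finset (Fin m))
    (f : (Fin m → ℕ) →₀ RatFunc ℚ) :
    ∑ d ∈ f.support, f d * qp (∑ i ∈ act, d i) =
      ∑ d ∈ f.support,
        ∑ α ∈ Fintype.piFinset (fun i => Finset.range (if i ∈ act then d i + 1 else 1)),
          f d * ((-q) ^ (∑ i ∈ act, α i) *
            q ^ (∑ i ∈ act, (α i) ^ 2 +
              2 * ∑ i ∈ act, ∑ j ∈ act, if j < i then α i * d j else 0) *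
            ∏ i ∈ act, (qp (d i) / (qp (α i) * qp (d i - α i)))) := by
  refine Finset.sum_congr rfl fun d _ => ?_
  rw [← Finset.mul_sum]
  congr 1
  set D : Fin m → ℕ := fun i => ∑ j ∈ act, if j < i then d j else 0 with hD
  have stepA : ∀ α : Fin m → ℕ,
      ((-q) ^ (∑ i ∈ act, α i) *
        q ^ (∑ i ∈ act, (α i) ^ 2 +
          2 * ∑ i ∈ act, ∑ j ∈ act, if j < i then α i * d j else 0) *
        ∏ i ∈ act, (qp (d i) / (qp (α i) * qp (d i - α i))))
      = ∏ i : Fin m, (if i ∈ act then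
          (-q) ^ (α i) * q ^ ((α i) ^ 2 + 2 * ((α i) * D i)) *
            (qp (d i) / (qp (α i) * qp (d i - α i))) else 1) := by
    intro α
    rw [Finset.prod_ite_mem, Finset.univ_inter, Finset.prod_mul_distrib,
      Finset.prod_mul_distrib, Finset.prod_pow_eq_pow_sum, Finset.prod_pow_eq_pow_sum]
    congr 2
    simp [hD, Finset.sum_add_distrib, Finset.mul_sum, mul_ite, mul_zero]
  have stepB := Finset.prod_univ_sum
    (fun i => Finset.range (if i ∈ act then d i + 1 else 1))
    (fun i a => if i ∈ act then
      (-q) ^ a * q ^ (a ^ 2 + 2 * (a * D i)) * (qp (d i) / (qp a * qp (d i - a))) else 1)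
  rw [Finset.sum_congr rfl fun α _ => stepA α, ← stepB]
  have stepC : ∀ i : Fin m,
      (∑ a ∈ Finset.range (if i ∈ act then d i + 1 else 1),
        (if i ∈ act then (-q) ^ a * q ^ (a ^ 2 + 2 * (a * D i)) *
          (qp (d i) / (qp a * qp (d i - a))) else 1))
      = (if i ∈ act then qp (d i + D i) / qp (D i) else 1) := by
    intro i
    by_cases hi : i ∈ act
    · simp only [if_pos hi]
      rw [eq_div_iff (qp_ne_zero (D i)), ← S_mul (d i) (D i)]
      congr 1
      refine Finset.sum_congr rfl fun a ha => ?_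
      have ha' : a ≤ d i := by have := Finset.mem_range.mp ha; omega
      rw [B, if_pos ha']
    · simp [if_neg hi]
  rw [Finset.prod_congr rfl fun i _ => stepC i, Finset.prod_ite_mem, Finset.univ_inter,
    telescope]
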